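/- arXiv:1512.08912 — 2 statements merged into one kernel-verified Lean document; each statement's English description precedes it below -/
import Mathlib

section
/- (Skorohod's deterministic reflection lemma, existence) Let X : [0,∞) → ℝ be continuous with X_0 = 0. Define F_t = sup_{s ≤ t} X_s⁻ (where x⁻ = max(-x, 0)) and Z_t = X_t + F_t. Then: (1) Z_t ≥ 0 for all t; (2) F is nondecreasing, continuous, with F_0 = 0; (3) F increases only on the set {t : Z_t = 0}, i.e., the Stieltjes measure dF is carried by {t : Z_t = 0}. -/
/-- The Skorohod regulator `F_t = sup_{s ≤ t} X_s⁻`. -/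
noncomputable def skorohodF (X : ℝ → ℝ) (t : ℝ) : ℝ :=
  sSup ((fun s => max (-X s) 0) '' Set.Icc 0 t)

section aux

variable {X : ℝ → ℝ}

private lemma sk_bdd (hX : Continuous X) (t : ℝ) :
    BddAbove ((fun s => max (-X s) 0) '' Set.Icc 0 t) :=
  (isCompact_Icc.image (by continuity)).bddAbove

private lemma sk_le (hX : Continuous X) {s t : ℝ} (hs : s ∈ Set.Icc 0 t) :
    max (-X s) 0 ≤ skorohodF X t :=
  le_csSup (sk_bdd hX t) ⟨s, hs, rfl⟩

private lemma sk_attain (hX : Continuous X) {t : ℝ} (ht : 0 ≤ t) :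
    ∃ s ∈ Set.Icc 0 t, skorohodF X t = max (-X s) 0 := by
  have hc : IsCompact ((fun s => max (-X s) 0) '' Set.Icc 0 t) :=
    isCompact_Icc.image (by continuity)
  have hne : ((fun s => max (-X s) 0) '' Set.Icc 0 t).Nonempty :=
    (Set.nonempty_Icc.2 ht).image _
  obtain ⟨s, hs, hseq⟩ := hc.sSup_mem hne
  exact ⟨s, hs, hseq.symm⟩

private lemma sk_mono (hX : Continuous X) : MonotoneOn (skorohodF X) (Set.Ici 0) := by
  intro a ha b _ hab
  exact csSup_le_csSup (sk_bdd hX b)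
    ((Set.nonempty_Icc.2 ha).image _)
    (Set.image_mono (Set.Icc_subset_Icc_right hab))

/-- Key step: on bounded intervals the running sup doesn't jump. -/
private lemma sk_key (hX : Continuous X) {a b T ε δ : ℝ} (ha : 0 ≤ a) (hab : a ≤ b)
    (hbT : b ≤ T) (hδ : b - a < δ)
    (hunif : ∀ x ∈ Set.Icc (0:ℝ) T, ∀ y ∈ Set.Icc (0:ℝ) T, dist x y < δ →
      dist (max (-X x) 0) (max (-X y) 0) < ε) (hε : 0 ≤ ε) :
    skorohodF X b ≤ skorohodF X a + ε := by
  obtain ⟨s, hs, hseq⟩ := sk_attain hX (ha.trans hab)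
  rcases le_or_gt s a with h | h
  · have := sk_le hX (X := X) (Set.mem_Icc.2 ⟨hs.1, h⟩)
    rw [hseq]; linarith
  · have hsa : dist s a < δ := by
      rw [Real.dist_eq, abs_of_nonneg (by linarith)]
      linarith [hs.2]
    have h1 := hunif s ⟨hs.1, hs.2.trans hbT⟩ a ⟨ha, by linarith⟩ hsa
    rw [Real.dist_eq] at h1
    have h2 : max (-X s) 0 < max (-X a) 0 + ε := by
      cases' abs_lt.1 h1 with h1a h1b; linarith
    have h3 := sk_le hX (X := X) (Set.mem_Icc.2 ⟨ha, le_refl a⟩)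
    rw [hseq]; linarith

private lemma sk_cont (hX : Continuous X) : ContinuousOn (skorohodF X) (Set.Ici 0) := by
  intro t₀ ht₀
  rw [Metric.continuousWithinAt_iff]
  intro ε hε
  have hfc : ContinuousOn (fun s => max (-X s) 0) (Set.Icc (0:ℝ) (t₀ + 1)) :=
    (by continuity : Continuous fun s => max (-X s) 0).continuousOn
  have huc := isCompact_Icc.uniformContinuousOn_of_continuous hfc
  rw [Metric.uniformContinuousOn_iff] at huc
  obtain ⟨δ, hδ, hunif⟩ := huc (ε / 2) (by linarith)
  refine ⟨min δ 1, lt_min hδ one_pos, fun t ht hdist => ?_⟩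
  have hd1 : dist t t₀ < δ := lt_of_lt_of_le hdist (min_le_left _ _)
  have hd2 : dist t t₀ < 1 := lt_of_lt_of_le hdist (min_le_right _ _)
  rw [Real.dist_eq] at hd1 hd2
  have hεhalf : (0:ℝ) ≤ ε / 2 := by linarith
  rcases le_total t t₀ with h | h
  · have hkey := sk_key hX ht h (le_refl t₀ |>.trans (by linarith)) (by cases' abs_lt.1 hd1 with u v; linarith) hunif hεhalf
    have hmono := sk_mono hX ht (Set.mem_Ici.2 ht₀) h
    rw [Real.dist_eq, abs_of_nonpos (by linarith)]
    linarith
  · have hkey := sk_key hX ht₀ h (by cases' abs_lt.1 hd2 with u v; linarith) (by cases' abs_lt.1 hd1 with u v; linarith) hunif hεhalf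
    have hmono := sk_mono hX (Set.mem_Ici.2 ht₀) ht h
    rw [Real.dist_eq, abs_of_nonneg (by linarith)]
    linarith

end aux

/-- Skorohod reflection, existence: with `F_t = sup_{s≤t} X_s⁻` and
`Z = X + F` one has `Z ≥ 0`, `F` is nondecreasing, continuous, `F₀ = 0`, and `F`
increases only on `{Z = 0}` (it is constant on any interval where `Z > 0`). -/
theorem stmt_6 (X : ℝ → ℝ) (hX : Continuous X) (hX0 : X 0 = 0) :
    (∀ t, 0 ≤ t → 0 ≤ X t + skorohodF X t) ∧
    MonotoneOn (skorohodF X) (Set.Ici 0) ∧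
    ContinuousOn (skorohodF X) (Set.Ici 0) ∧
    skorohodF X 0 = 0 ∧
    (∀ a b : ℝ, 0 ≤ a → a ≤ b →
      (∀ s ∈ Set.Icc a b, 0 < X s + skorohodF X s) →
      skorohodF X a = skorohodF X b) := by
  refine ⟨?_, sk_mono hX, sk_cont hX, ?_, ?_⟩
  · intro t ht
    have h1 := sk_le hX (X := X) (Set.mem_Icc.2 ⟨ht, le_refl t⟩)
    have h2 : -X t ≤ max (-X t) 0 := le_max_left _ _
    linarith
  · have : skorohodF X 0 = sSup ((fun s => max (-X s) 0) '' {0}) := by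
      unfold skorohodF; rw [Set.Icc_self]
    rw [this, Set.image_singleton, csSup_singleton, hX0]
    simp
  · intro a b ha hab hpos
    have hb : 0 ≤ b := ha.trans hab
    refine le_antisymm (sk_mono hX ha hb hab) ?_
    by_contra hlt
    push_neg at hlt
    obtain ⟨s, hs, hseq⟩ := sk_attain hX hb
    -- s must be > a
    have hsa : a < s := by
      by_contra hsa
      push_neg at hsa
      have := sk_le hX (X := X) (Set.mem_Icc.2 ⟨hs.1, hsa⟩)
      rw [hseq] at hlt; linarith
    -- F s = F b = max (-X s) 0
    have hFs_le : skorohodF X s ≤ skorohodF X b :=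
      sk_mono hX (Set.mem_Ici.2 hs.1) (Set.mem_Ici.2 hb) hs.2
    have hFs_ge : max (-X s) 0 ≤ skorohodF X s :=
      sk_le hX (Set.mem_Icc.2 ⟨hs.1, le_refl s⟩)
    have hFa_nonneg : 0 ≤ skorohodF X a := by
      have := sk_le hX (X := X) (Set.mem_Icc.2 ⟨le_refl 0, ha⟩)
      have h0 : (0:ℝ) ≤ max (-X 0) 0 := le_max_right _ _
      linarith
    have hpos_s : 0 < max (-X s) 0 := by rw [← hseq]; linarith
    have hmax : max (-X s) 0 = -X s := by
      rcases max_cases (-X s) (0:ℝ) with ⟨h1, _⟩ | ⟨h1, _⟩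
      · exact h1
      · rw [h1] at hpos_s; exact absurd hpos_s (lt_irrefl 0)
    have hZ := hpos s ⟨le_of_lt hsa, hs.2⟩
    have : skorohodF X s = -X s := by rw [← hmax]; rw [hseq] at hFs_le; linarith
    linarith
end

section
/- (Skorohod's deterministic reflection lemma, uniqueness) Let X : [0,∞) → ℝ be continuous with X_0 = 0. Suppose (Z, F) and (Y, G) are two pairs of continuous functions such that Z = X + F, Y = X + G, Z ≥ 0, Y ≥ 0, F and G are nondecreasing with F_0 = G_0 = 0, and F (resp. G) increases only on {Z = 0} (resp. {Y = 0}). Then Z = Y and F = G. -/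
lemma skorohod_uniq_aux (X Z Y F G : ℝ → ℝ)
    (hFc : Continuous F) (hGc : Continuous G)
    (hZ : ∀ t, 0 ≤ t → Z t = X t + F t) (hY : ∀ t, 0 ≤ t → Y t = X t + G t)
    (hYpos : ∀ t, 0 ≤ t → 0 ≤ Y t)
    (hG : MonotoneOn G (Set.Ici 0))
    (hF0 : F 0 = 0) (hG0 : G 0 = 0)
    (hFsupp : ∀ a b : ℝ, 0 ≤ a → a ≤ b → (∀ s ∈ Set.Icc a b, Z s ≠ 0) → F a = F b) :
    ∀ t, 0 ≤ t → F t ≤ G t := by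
  intro t ht
  by_contra h
  push_neg at h
  set S : Set ℝ := Set.Icc 0 t ∩ {u | F u ≤ G u} with hS
  have hSc : IsClosed S := isClosed_Icc.inter (isClosed_le hFc hGc)
  have hSne : S.Nonempty := ⟨0, ⟨le_refl 0, ht⟩, by simp [hF0, hG0]⟩
  have hSbdd : BddAbove S := ⟨t, fun u hu => hu.1.2⟩
  set s := sSup S with hs
  have hsS : s ∈ S := hSc.csSup_mem hSne hSbdd
  have hs0 : 0 ≤ s := hsS.1.1
  have hst : s < t := lt_of_le_of_ne hsS.1.2 (fun he => absurd (he ▸ hsS.2) (not_le.mpr h))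
  have hIoc : ∀ u ∈ Set.Ioc s t, G u < F u := by
    intro u hu
    by_contra hc
    push_neg at hc
    have : u ∈ S := ⟨⟨le_trans hs0 hu.1.le, hu.2⟩, hc⟩
    exact absurd (le_csSup hSbdd this) (not_le.mpr hu.1)
  have hZne : ∀ u ∈ Set.Ioc s t, Z u ≠ 0 := by
    intro u hu
    have hu0 : 0 ≤ u := le_trans hs0 hu.1.le
    have : Y u < Z u := by
      rw [hZ u hu0, hY u hu0]
      exact add_lt_add_right (hIoc u hu) _
    exact ne_of_gt (lt_of_le_of_lt (hYpos u hu0) this)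
  have hFa : ∀ a ∈ Set.Ioc s t, F a = F t := by
    intro a ha
    exact hFsupp a t (le_trans hs0 ha.1.le) ha.2
      (fun u hu => hZne u ⟨lt_of_lt_of_le ha.1 hu.1, hu.2⟩)
  have h1 : Filter.Tendsto F (nhdsWithin s (Set.Ioi s)) (nhds (F s)) :=
    (hFc.tendsto s).mono_left nhdsWithin_le_nhds
  have h2 : Filter.Tendsto F (nhdsWithin s (Set.Ioi s)) (nhds (F t)) := by
    refine Filter.Tendsto.congr' ?_ tendsto_const_nhds
    filter_upwards [Ioc_mem_nhdsGT_of_mem ⟨le_refl s, hst⟩] with a ha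
    exact (hFa a ha).symm
  have hFst : F s = F t := tendsto_nhds_unique h1 h2
  have : F t ≤ G t := hFst ▸ le_trans hsS.2 (hG hs0 (le_trans hs0 hst.le) hst.le)
  exact absurd this (not_le.mpr h)

/-- Skorohod reflection, uniqueness: two solutions `(Z,F)` and `(Y,G)`
of the Skorohod problem for a continuous `X` with `X₀ = 0` coincide on `[0,∞)`.
"F increases only on `{Z = 0}`" is expressed as: `F` is constant on every interval
on which `Z ≠ 0`. -/
theorem stmt_7 (X Z Y F G : ℝ → ℝ)
    (hX : Continuous X) (hX0 : X 0 = 0)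
    (hZc : Continuous Z) (hYc : Continuous Y) (hFc : Continuous F) (hGc : Continuous G)
    (hZ : ∀ t, 0 ≤ t → Z t = X t + F t) (hY : ∀ t, 0 ≤ t → Y t = X t + G t)
    (hZpos : ∀ t, 0 ≤ t → 0 ≤ Z t) (hYpos : ∀ t, 0 ≤ t → 0 ≤ Y t)
    (hF : MonotoneOn F (Set.Ici 0)) (hG : MonotoneOn G (Set.Ici 0))
    (hF0 : F 0 = 0) (hG0 : G 0 = 0)
    (hFsupp : ∀ a b : ℝ, 0 ≤ a → a ≤ b → (∀ s ∈ Set.Icc a b, Z s ≠ 0) → F a = F b)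
    (hGsupp : ∀ a b : ℝ, 0 ≤ a → a ≤ b → (∀ s ∈ Set.Icc a b, Y s ≠ 0) → G a = G b) :
    ∀ t, 0 ≤ t → Z t = Y t ∧ F t = G t := by
  intro t ht
  have h1 := skorohod_uniq_aux X Z Y F G hFc hGc hZ hY hYpos hG hF0 hG0 hFsupp t ht
  have h2 := skorohod_uniq_aux X Y Z G F hGc hFc hY hZ hZpos hF hG0 hF0 hGsupp t ht
  have hFG : F t = G t := le_antisymm h1 h2
  exact ⟨by rw [hZ t ht, hY t ht, hFG], hFG⟩
end
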